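/- Let s ≥ 0. There exists a constant C > 0 depending only on s such that for every real λ ≠ 0 and every absolutely continuous u : ℝ → ℂ with ⟨x⟩^s u ∈ L²(ℝ) and ⟨x⟩^s u' ∈ L²(ℝ), one has ‖u‖_{L²_s} ≤ (C / (|λ| · (min(|λ|,1))^s)) · ‖u' − λu‖_{L²_s}. -/

import Mathlib

open MeasureTheory Real Set intervalIntegral Filter

section AuxLemmas

lemma triangle_swap {𝕜 : Type*} [RCLike 𝕜] {a b : ℝ} {f g : ℝ → 𝕜}
    (hf : IntegrableOn f (Set.Ioc a b)) (hg : IntegrableOn g (Set.Ioc a b)) :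
    ∫ t in Set.Ioc a b, (∫ s in Set.Ioc a t, f s) * g t
      = ∫ s in Set.Ioc a b, f s * ∫ t in Set.Ioc s b, g t := by
  set μ := (volume : Measure ℝ).restrict (Set.Ioc a b) with hμ
  set H : ℝ × ℝ → 𝕜 := fun p => if p.1 ≤ p.2 then f p.1 * g p.2 else 0 with hH
  have hset : MeasurableSet {p : ℝ × ℝ | p.1 ≤ p.2} :=
    measurableSet_le measurable_fst measurable_snd
  have hFprod : Integrable (fun p : ℝ × ℝ => f p.1 * g p.2) (μ.prod μ) := Integrable.mul_prod hf hg
  have hHint : Integrable H (μ.prod μ) := by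
    have : H = {p : ℝ × ℝ | p.1 ≤ p.2}.indicator (fun p => f p.1 * g p.2) := by
      funext p
      by_cases h : p.1 ≤ p.2 <;> simp [hH, h, Set.indicator]
    rw [this]
    exact hFprod.indicator hset
  have swap : ∫ s, (∫ t, H (s, t) ∂μ) ∂μ = ∫ t, (∫ s, H (s, t) ∂μ) ∂μ := by
    exact integral_integral_swap (f := fun s t => H (s, t)) hHint
  have hleft : ∫ t, (∫ s, H (s, t) ∂μ) ∂μ = ∫ t in Set.Ioc a b, (∫ s in Set.Ioc a t, f s) * g t := by
    rw [hμ]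
    apply setIntegral_congr_fun measurableSet_Ioc
    intro t ht
    have : ∀ s : ℝ, H (s, t) = (Set.Iic t).indicator (fun s => f s * g t) s := by
      intro s
      by_cases h : s ≤ t <;> simp [hH, h, Set.indicator]
    calc ∫ s, H (s, t) ∂μ = ∫ s, (Set.Iic t).indicator (fun s => f s * g t) s ∂μ := by
            exact integral_congr_ae (Filter.Eventually.of_forall this)
      _ = ∫ s in Set.Iic t, f s * g t ∂μ := integral_indicator measurableSet_Iic
      _ = ∫ s in Set.Iic t ∩ Set.Ioc a b, f s * g t := by
            rw [hμ, Measure.restrict_restrict measurableSet_Iic]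
      _ = ∫ s in Set.Ioc a t, f s * g t := by
            have hseteq : Set.Iic t ∩ Set.Ioc a b = Set.Ioc a t := by
              ext z
              simp only [Set.mem_inter_iff, Set.mem_Iic, Set.mem_Ioc]
              exact ⟨fun ⟨h1, h2, _⟩ => ⟨h2, h1⟩,
                fun ⟨h2, h1⟩ => ⟨h1, h2, le_trans h1 ht.2⟩⟩
            rw [hseteq]
      _ = (∫ s in Set.Ioc a t, f s) * g t := integral_mul_const _ _
  have hright : ∫ s, (∫ t, H (s, t) ∂μ) ∂μ = ∫ s in Set.Ioc a b, f s * ∫ t in Set.Ioc s b, g t := by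
    rw [hμ]
    apply setIntegral_congr_fun measurableSet_Ioc
    intro s hs
    have : ∀ t : ℝ, H (s, t) = (Set.Ici s).indicator (fun t => f s * g t) t := by
      intro t
      by_cases h : s ≤ t <;> simp [hH, h, Set.indicator]
    calc ∫ t, H (s, t) ∂μ = ∫ t, (Set.Ici s).indicator (fun t => f s * g t) t ∂μ := by
            exact integral_congr_ae (Filter.Eventually.of_forall this)
      _ = ∫ t in Set.Ici s, f s * g t ∂μ := integral_indicator measurableSet_Ici
      _ = ∫ t in Set.Ici s ∩ Set.Ioc a b, f s * g t := by
            rw [hμ, Measure.restrict_restrict measurableSet_Ici]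
      _ = ∫ t in Set.Icc s b, f s * g t := by
            have hseteq : Set.Ici s ∩ Set.Ioc a b = Set.Icc s b := by
              ext z
              simp only [Set.mem_inter_iff, Set.mem_Ici, Set.mem_Ioc, Set.mem_Icc]
              exact ⟨fun ⟨h1, _, h3⟩ => ⟨h1, h3⟩,
                fun ⟨h1, h3⟩ => ⟨h1, lt_of_lt_of_le hs.1 h1, h3⟩⟩
            rw [hseteq]
      _ = ∫ t in Set.Ioc s b, f s * g t := integral_Icc_eq_integral_Ioc
      _ = f s * ∫ t in Set.Ioc s b, g t := integral_const_mul _ _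
  rw [← hleft, ← swap, hright]
lemma ftc_mul {𝕜 : Type*} [RCLike 𝕜] {u v u' v' : ℝ → 𝕜}
    (hu' : ∀ a b : ℝ, IntervalIntegrable u' volume a b)
    (hv' : ∀ a b : ℝ, IntervalIntegrable v' volume a b)
    (hu : ∀ x y : ℝ, u y - u x = ∫ t in x..y, u' t)
    (hv : ∀ x y : ℝ, v y - v x = ∫ t in x..y, v' t)
    (x y : ℝ) :
    u y * v y - u x * v x = ∫ t in x..y, (u' t * v t + u t * v' t) := by
  suffices orient : ∀ a b : ℝ, a ≤ b →
      u b * v b - u a * v a = ∫ t in a..b, (u' t * v t + u t * v' t) by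
    rcases le_total x y with h | h
    · exact orient x y h
    · have := orient y x h
      rw [intervalIntegral.integral_symm, ← this]; ring
  intro a b hab
  -- primitives
  set P : ℝ → 𝕜 := fun t => ∫ s in a..t, u' s with hP
  set Q : ℝ → 𝕜 := fun t => ∫ s in t..b, v' s with hQ
  have hPty : ∀ t, u t = u a + P t := fun t => by
    have := hu a t; rw [hP]; simp only; linear_combination this
  have hQty : ∀ t, v t = v b - Q t := fun t => by
    have := hv t b; rw [hQ]; simp only; linear_combination -this
  have hPcont : Continuous P := intervalIntegral.continuous_primitive hu' a
  have hQcont : Continuous Q := by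
    have h1 : Continuous fun t => ∫ s in a..t, v' s :=
      intervalIntegral.continuous_primitive hv' a
    have h2 : ∀ t : ℝ, Q t = (∫ s in a..b, v' s) - ∫ s in a..t, v' s := by
      intro t
      rw [hQ]; simp only
      rw [eq_sub_iff_add_eq, add_comm]
      exact intervalIntegral.integral_add_adjacent_intervals (hv' a t) (hv' t b)
    rw [show Q = fun t => (∫ s in a..b, v' s) - ∫ s in a..t, v' s from funext h2]
    exact continuous_const.sub h1
  have hu'I : IntegrableOn u' (Ioc a b) := (hu' a b).1
  have hv'I : IntegrableOn v' (Ioc a b) := (hv' a b).1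
  -- bounds for P and Q on the interval
  obtain ⟨CP, hCP⟩ : ∃ C, ∀ t ∈ Icc a b, ‖P t‖ ≤ C :=
    (isCompact_Icc.exists_bound_of_continuousOn hPcont.continuousOn)
  obtain ⟨CQ, hCQ⟩ : ∃ C, ∀ t ∈ Icc a b, ‖Q t‖ ≤ C :=
    (isCompact_Icc.exists_bound_of_continuousOn hQcont.continuousOn)
  -- integrabilities
  have hPv' : IntegrableOn (fun t => P t * v' t) (Ioc a b) := by
    apply Integrable.mono' (hv'I.norm.const_mul CP)
      (hPcont.aestronglyMeasurable.mul hv'I.aestronglyMeasurable)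
    refine (ae_restrict_iff' measurableSet_Ioc).2 (Filter.Eventually.of_forall fun t ht => ?_)
    simp only [Pi.mul_apply, norm_mul]
    exact mul_le_mul_of_nonneg_right (hCP t ⟨le_of_lt ht.1, ht.2⟩) (norm_nonneg _)
  have hu'Q : IntegrableOn (fun t => u' t * Q t) (Ioc a b) := by
    apply Integrable.mono' (hu'I.norm.const_mul CQ)
      (hu'I.aestronglyMeasurable.mul hQcont.aestronglyMeasurable)
    refine (ae_restrict_iff' measurableSet_Ioc).2 (Filter.Eventually.of_forall fun t ht => ?_)
    simp only [Pi.mul_apply, norm_mul]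
    rw [mul_comm CQ]
    exact mul_le_mul_of_nonneg_left (hCQ t ⟨le_of_lt ht.1, ht.2⟩) (norm_nonneg _)
  -- the swap identity
  have hswap : ∫ t in Ioc a b, P t * v' t = ∫ t in Ioc a b, u' t * Q t := by
    have e1 : ∫ t in Ioc a b, P t * v' t
        = ∫ t in Ioc a b, (∫ s in Ioc a t, u' s) * v' t := by
      apply setIntegral_congr_fun measurableSet_Ioc
      intro t ht
      simp only [hP]
      rw [intervalIntegral.integral_of_le (le_of_lt ht.1)]
    have e2 : ∫ t in Ioc a b, u' t * Q t
        = ∫ t in Ioc a b, u' t * ∫ s in Ioc t b, v' s := by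
      apply setIntegral_congr_fun measurableSet_Ioc
      intro t ht
      simp only [hQ]
      rw [intervalIntegral.integral_of_le ht.2]
    rw [e1, e2]
    exact triangle_swap hu'I hv'I
  -- main computation
  have hub : P b = u b - u a := by rw [hPty b]; ring
  have hvb : Q a = v b - v a := by rw [hQty a]; ring
  rw [intervalIntegral.integral_of_le hab]
  have hint1 : ∫ t in Ioc a b, (u' t * v t + u t * v' t)
      = ∫ t in Ioc a b, ((u' t * v b - u' t * Q t) + (u a * v' t + P t * v' t)) := by
    apply setIntegral_congr_fun measurableSet_Ioc
    intro t _
    show u' t * v t + u t * v' t = u' t * v b - u' t * Q t + (u a * v' t + P t * v' t)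
    rw [hPty t, hQty t]; ring
  rw [hint1]
  have hAv : IntegrableOn (fun t => u' t * v b) (Ioc a b) := hu'I.mul_const _
  have hBv : IntegrableOn (fun t => u a * v' t) (Ioc a b) := hv'I.const_mul _
  have hsub : IntegrableOn (fun t => u' t * v b - u' t * Q t) (Ioc a b) := hAv.sub hu'Q
  have hadd : IntegrableOn (fun t => u a * v' t + P t * v' t) (Ioc a b) := hBv.add hPv'
  rw [integral_add hsub hadd, integral_sub hAv hu'Q, integral_add hBv hPv', hswap]
  have hiu : ∫ t in Ioc a b, u' t = u b - u a := by
    rw [← intervalIntegral.integral_of_le hab, ← hu a b]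
  have hiv : ∫ t in Ioc a b, v' t = v b - v a := by
    rw [← intervalIntegral.integral_of_le hab, ← hv a b]
  rw [MeasureTheory.integral_mul_const, MeasureTheory.integral_const_mul, hiu, hiv]
  ring
lemma intervalIntegral_conj {f : ℝ → ℂ} {a b : ℝ} :
    ∫ t in a..b, (starRingEnd ℂ) (f t) = (starRingEnd ℂ) (∫ t in a..b, f t) := by
  rw [intervalIntegral, intervalIntegral, integral_conj, integral_conj, map_sub]

lemma intervalIntegrable_conj {f : ℝ → ℂ} {a b : ℝ}
    (hf : IntervalIntegrable f volume a b) :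
    IntervalIntegrable (fun t => (starRingEnd ℂ) (f t)) volume a b := by
  constructor
  · exact hf.1.norm.mono' (Complex.continuous_conj.comp_aestronglyMeasurable hf.1.aestronglyMeasurable)
      (Filter.Eventually.of_forall fun t => by simp)
  · exact hf.2.norm.mono' (Complex.continuous_conj.comp_aestronglyMeasurable hf.2.aestronglyMeasurable)
      (Filter.Eventually.of_forall fun t => by simp)

lemma ftc_normsq {u u' : ℝ → ℂ}
    (hu' : ∀ a b : ℝ, IntervalIntegrable u' volume a b)
    (hu : ∀ x y : ℝ, u y - u x = ∫ t in x..y, u' t)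
    (x y : ℝ) :
    (‖u y‖ ^ 2 - ‖u x‖ ^ 2 : ℝ)
      = ∫ t in x..y, 2 * ((starRingEnd ℂ) (u t) * u' t).re := by
  have hvftc : ∀ x y : ℝ, (starRingEnd ℂ) (u y) - (starRingEnd ℂ) (u x)
      = ∫ t in x..y, (starRingEnd ℂ) (u' t) := by
    intro x y
    rw [intervalIntegral_conj, ← map_sub, hu x y]
  have key := ftc_mul hu' (fun a b => intervalIntegrable_conj (hu' a b)) hu hvftc x y
  have hnorm : ∀ z : ℝ, u z * (starRingEnd ℂ) (u z) = ((‖u z‖ ^ 2 : ℝ) : ℂ) := by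
    intro z
    rw [Complex.mul_conj, Complex.normSq_eq_norm_sq]
  have hintegrand : ∀ t : ℝ,
      u' t * (starRingEnd ℂ) (u t) + u t * (starRingEnd ℂ) (u' t)
        = ((2 * ((starRingEnd ℂ) (u t) * u' t).re : ℝ) : ℂ) := by
    intro t
    have h1 : u t * (starRingEnd ℂ) (u' t)
        = (starRingEnd ℂ) ((starRingEnd ℂ) (u t) * u' t) := by
      rw [map_mul, Complex.conj_conj]
    rw [h1, mul_comm (u' t), Complex.add_conj]
  rw [hnorm, hnorm] at key
  have key2 : ((‖u y‖ ^ 2 - ‖u x‖ ^ 2 : ℝ) : ℂ)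
      = ((∫ t in x..y, 2 * ((starRingEnd ℂ) (u t) * u' t).re : ℝ) : ℂ) := by
    rw [Complex.ofReal_sub, key,
      show (fun t => u' t * (starRingEnd ℂ) (u t) + u t * (starRingEnd ℂ) (u' t))
        = fun t => ((2 * ((starRingEnd ℂ) (u t) * u' t).re : ℝ) : ℂ) from funext hintegrand,
      intervalIntegral.integral_ofReal]
  exact_mod_cast key2

lemma limit_zero_atTop {φ : ℝ → ℝ} {L : ℝ} (hφ : Integrable φ (volume : Measure ℝ))
    (h0 : ∀ z, 0 ≤ φ z) (hlim : Tendsto φ atTop (nhds L)) : L = 0 := by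
  by_contra hL
  have hL0 : 0 ≤ L := le_of_tendsto_of_tendsto' tendsto_const_nhds hlim (fun z => h0 z)
  have hLpos : 0 < L := lt_of_le_of_ne hL0 (Ne.symm hL)
  have hev : ∀ᶠ z in atTop, L / 2 ≤ φ z :=
    hlim.eventually (eventually_ge_nhds (by linarith))
  obtain ⟨N, hN⟩ := hev.exists_forall_of_atTop
  have hconst : Integrable (fun _ : ℝ => L / 2) ((volume : Measure ℝ).restrict (Ici N)) := by
    apply (hφ.integrableOn (s := Ici N)).mono' aestronglyMeasurable_const
    refine (ae_restrict_iff' measurableSet_Ici).2 (Filter.Eventually.of_forall fun z hz => ?_)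
    rw [Real.norm_eq_abs, abs_of_nonneg (by linarith)]
    exact hN z hz
  rw [integrable_const_iff] at hconst
  rcases hconst with h | h
  · linarith
  · have h := h.measure_univ_lt_top; rw [Measure.restrict_apply_univ, Real.volume_Ici] at h
    exact (lt_irrefl _ h).elim

lemma limit_zero_atBot {φ : ℝ → ℝ} {L : ℝ} (hφ : Integrable φ (volume : Measure ℝ))
    (h0 : ∀ z, 0 ≤ φ z) (hlim : Tendsto φ atBot (nhds L)) : L = 0 := by
  by_contra hL
  have hL0 : 0 ≤ L := le_of_tendsto_of_tendsto' tendsto_const_nhds hlim (fun z => h0 z)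
  have hLpos : 0 < L := lt_of_le_of_ne hL0 (Ne.symm hL)
  have hev : ∀ᶠ z in atBot, L / 2 ≤ φ z :=
    hlim.eventually (eventually_ge_nhds (by linarith))
  obtain ⟨N, hN⟩ := hev.exists_forall_of_atBot
  have hconst : Integrable (fun _ : ℝ => L / 2) ((volume : Measure ℝ).restrict (Iic N)) := by
    apply (hφ.integrableOn (s := Iic N)).mono' aestronglyMeasurable_const
    refine (ae_restrict_iff' measurableSet_Iic).2 (Filter.Eventually.of_forall fun z hz => ?_)
    rw [Real.norm_eq_abs, abs_of_nonneg (by linarith)]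
    exact hN z hz
  rw [integrable_const_iff] at hconst
  rcases hconst with h | h
  · linarith
  · have h := h.measure_univ_lt_top; rw [Measure.restrict_apply_univ, Real.volume_Iic] at h
    exact (lt_irrefl _ h).elim

lemma integral_eq_zero_of_primitive {φ ψ : ℝ → ℝ}
    (hψ : Integrable ψ (volume : Measure ℝ)) (hφ : Integrable φ (volume : Measure ℝ))
    (h0 : ∀ z, 0 ≤ φ z)
    (hftc : ∀ x y : ℝ, φ y - φ x = ∫ t in x..y, ψ t) :
    ∫ t : ℝ, ψ t = 0 := by
  have htop : Tendsto φ atTop (nhds (φ 0 + ∫ t in Ioi (0:ℝ), ψ t)) := by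
    have h1 := intervalIntegral_tendsto_integral_Ioi 0 hψ.integrableOn tendsto_id
    have h2 : ∀ y : ℝ, φ y = φ 0 + ∫ t in (0:ℝ)..y, ψ t := by
      intro y
      have := hftc 0 y; linarith
    exact Tendsto.congr (fun y => (h2 y).symm) (tendsto_const_nhds.add h1)
  have hbot : Tendsto φ atBot (nhds (φ 0 - ∫ t in Iic (0:ℝ), ψ t)) := by
    have h1 := intervalIntegral_tendsto_integral_Iic 0 hψ.integrableOn tendsto_id
    have h2 : ∀ y : ℝ, φ y = φ 0 - ∫ t in (id y)..(0:ℝ), ψ t := by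
      intro y
      have := hftc y 0; simp only [id]; linarith
    exact Tendsto.congr (fun y => (h2 y).symm) (tendsto_const_nhds.sub h1)
  have e1 : φ 0 + ∫ t in Ioi (0:ℝ), ψ t = 0 := limit_zero_atTop hφ h0 htop
  have e2 : φ 0 - ∫ t in Iic (0:ℝ), ψ t = 0 := limit_zero_atBot hφ h0 hbot
  rw [← intervalIntegral.integral_Iic_add_Ioi (b := (0:ℝ)) hψ.integrableOn hψ.integrableOn]
  linarith

end AuxLemmas

/-- The Japanese bracket `⟨x⟩ = √(1 + x²)`. -/
noncomputable def jap (x : ℝ) : ℝ := Real.sqrt (1 + x ^ 2)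

lemma one_le_jap (x : ℝ) : 1 ≤ jap x := by
  rw [jap, Real.one_le_sqrt]
  nlinarith [sq_nonneg x]

lemma jap_nonneg (x : ℝ) : 0 ≤ jap x := le_trans zero_le_one (one_le_jap x)

lemma jap_rpow (s : ℝ) (x : ℝ) : jap x ^ (2 * s) = (1 + x ^ 2) ^ s := by
  have hb : (0:ℝ) ≤ 1 + x ^ 2 := by positivity
  calc jap x ^ (2 * s) = ((1 + x ^ 2) ^ ((1:ℝ)/2)) ^ (2 * s) := by
        rw [jap, Real.sqrt_eq_rpow]
    _ = (1 + x ^ 2) ^ ((1/2 : ℝ) * (2 * s)) := (Real.rpow_mul hb _ _).symm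
    _ = (1 + x ^ 2) ^ s := by rw [show (1/2 : ℝ) * (2 * s) = s by ring]

lemma one_le_japs {s : ℝ} (hs : 0 ≤ s) (x : ℝ) : 1 ≤ jap x ^ s := by
  calc (1:ℝ) = 1 ^ s := (Real.one_rpow s).symm
    _ ≤ jap x ^ s := Real.rpow_le_rpow zero_le_one (one_le_jap x) hs

lemma japs_sq {s : ℝ} (x : ℝ) : (jap x ^ s) ^ (2:ℕ) = jap x ^ (2 * s) := by
  rw [← Real.rpow_natCast (jap x ^ s) 2, ← Real.rpow_mul (jap_nonneg x)]
  norm_num [mul_comm]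

set_option maxHeartbeats 1000000 in
/-- For `s ≥ 0` there is `C > 0` depending only on `s` such that for every real `λ ≠ 0` and
every absolutely continuous `u` with `⟨x⟩^s u ∈ L²` and `⟨x⟩^s u' ∈ L²`,
`‖u‖_{L²_s} ≤ (C / (|λ| (min(|λ|,1))^s)) ‖u' − λu‖_{L²_s}`. -/
theorem weighted_estimate_real_lambda
    (s : ℝ) (hs : 0 ≤ s) :
    ∃ C > 0, ∀ (lam : ℝ), lam ≠ 0 →
      ∀ (u u' : ℝ → ℂ),
        MemLp (fun x => (jap x ^ s : ℝ) • u x) 2 (volume : Measure ℝ) →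
        MemLp (fun x => (jap x ^ s : ℝ) • u' x) 2 (volume : Measure ℝ) →
        (∀ x y : ℝ, u y - u x = ∫ t in x..y, u' t) →
        Real.sqrt (∫ x : ℝ, jap x ^ (2 * s) * ‖u x‖ ^ 2)
          ≤ C / (|lam| * (min |lam| 1) ^ s) *
            Real.sqrt (∫ x : ℝ, jap x ^ (2 * s) * ‖u' x - (lam : ℂ) * u x‖ ^ 2) := by
  set M : ℝ := max (2 * s) 1 with hM
  have hM1 : (1:ℝ) ≤ M := le_max_right _ _
  have hMpos : (0:ℝ) < M := lt_of_lt_of_le one_pos hM1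
  have hMs : 2 * s ≤ M := le_max_left _ _
  refine ⟨2 * M ^ s, by positivity, ?_⟩
  intro lam hlam u u' hu2 hu'2 hftc
  have hlam0 : (0:ℝ) < |lam| := abs_pos.2 hlam
  set μ0 : ℝ := min |lam| 1 with hμ0
  have hμpos : 0 < μ0 := lt_min hlam0 one_pos
  have hμ1 : μ0 ≤ 1 := min_le_right _ _
  have hμlam : μ0 ≤ |lam| := min_le_left _ _
  set ε : ℝ := μ0 / M with hε
  have hεpos : 0 < ε := div_pos hμpos hMpos
  have hε1 : ε ≤ 1 := by
    rw [hε, div_le_one hMpos]; exact le_trans hμ1 hM1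
  have hsε : s * ε ≤ |lam| / 2 := by
    rw [hε, mul_div_assoc', div_le_div_iff₀ hMpos two_pos]
    nlinarith [mul_le_mul_of_nonneg_right hMs hμpos.le,
      mul_le_mul_of_nonneg_left hμlam hMpos.le]
  -- the weight and its derivative
  set W : ℝ → ℝ := fun x => (1 + (ε * x) ^ 2) ^ s with hW
  set W' : ℝ → ℝ := fun x => (2 * ε ^ 2 * x) * s * (1 + (ε * x) ^ 2) ^ (s - 1) with hW'
  have hbase : ∀ x : ℝ, (0:ℝ) < 1 + (ε * x) ^ 2 := fun x => by positivity
  have hWpos : ∀ x, 0 < W x := fun x => Real.rpow_pos_of_pos (hbase x) s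
  have hWderiv : ∀ x, HasDerivAt W (W' x) x := by
    intro x
    have h1 : HasDerivAt (fun x : ℝ => 1 + (ε * x) ^ 2) (2 * ε ^ 2 * x) x := by
      have h2 := ((hasDerivAt_pow 2 x).const_mul (ε ^ 2)).const_add 1
      have h3 : (fun y : ℝ => 1 + ε ^ 2 * y ^ 2) = fun y : ℝ => 1 + (ε * y) ^ 2 := by
        funext y; ring
      rw [h3] at h2
      convert h2 using 1
      all_goals norm_num
      case e'_4 => rfl
      case e'_5 => rfl
      all_goals ring
    exact h1.rpow_const (p := s) (Or.inl (ne_of_gt (hbase x)))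
  have hcb : Continuous fun x : ℝ => 1 + (ε * x) ^ 2 :=
    continuous_const.add ((continuous_const.mul continuous_id).pow 2)
  have hWcont : Continuous W :=
    hcb.rpow_const (fun x => Or.inl (ne_of_gt (hbase x)))
  have hW'cont : Continuous W' := by
    apply Continuous.mul
    · exact (continuous_const.mul continuous_id).mul continuous_const
    · exact hcb.rpow_const (fun x => Or.inl (ne_of_gt (hbase x)))
  have hWftc : ∀ x y : ℝ, W y - W x = ∫ t in x..y, W' t := by
    intro x y
    rw [intervalIntegral.integral_eq_sub_of_hasDerivAt (fun t _ => hWderiv t)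
      (hW'cont.intervalIntegrable x y)]
  have hWle : ∀ x, W x ≤ jap x ^ (2 * s) := by
    intro x
    rw [jap_rpow]
    apply Real.rpow_le_rpow (le_of_lt (hbase x)) _ hs
    nlinarith [mul_nonneg (by nlinarith [hε1, hεpos.le] : (0:ℝ) ≤ 1 - ε ^ 2) (sq_nonneg x)]
  have hWge : ∀ x, jap x ^ (2 * s) ≤ ε ^ (-(2 * s)) * W x := by
    intro x
    have e1 : ε ^ (2 * s) = ((ε ^ 2 : ℝ)) ^ s := by
      rw [← Real.rpow_natCast ε 2, ← Real.rpow_mul hεpos.le]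
      norm_num
    have e2 : (ε ^ 2) * (1 + x ^ 2) ≤ 1 + (ε * x) ^ 2 := by nlinarith [hε1, hεpos.le, sq_nonneg x]
    have h1 : ε ^ (2 * s) * (1 + x ^ 2) ^ s ≤ W x := by
      calc ε ^ (2 * s) * (1 + x ^ 2) ^ s = (ε ^ 2) ^ s * (1 + x ^ 2) ^ s := by rw [e1]
        _ = ((ε ^ 2) * (1 + x ^ 2)) ^ s := (Real.mul_rpow (by positivity) (by positivity)).symm
        _ ≤ (1 + (ε * x) ^ 2) ^ s := Real.rpow_le_rpow (by positivity) e2 hs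
    have e3 : ε ^ (-(2 * s)) * ε ^ (2 * s) = 1 := by
      rw [← Real.rpow_add hεpos]; norm_num
    have e4 : 0 ≤ ε ^ (-(2 * s)) := Real.rpow_nonneg hεpos.le _
    calc jap x ^ (2 * s) = (1 + x ^ 2) ^ s := jap_rpow s x
      _ = ε ^ (-(2 * s)) * (ε ^ (2 * s) * (1 + x ^ 2) ^ s) := by
          rw [← mul_assoc, e3, one_mul]
      _ ≤ ε ^ (-(2 * s)) * W x := mul_le_mul_of_nonneg_left h1 e4
  have hW'bound : ∀ x, |W' x| ≤ s * ε * W x := by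
    intro x
    have hb := hbase x
    have e5 : W x = (1 + (ε * x) ^ 2) * (1 + (ε * x) ^ 2) ^ (s - 1) := by
      rw [hW]
      rw [show (1 + (ε * x) ^ 2) * (1 + (ε * x) ^ 2) ^ (s - 1)
          = (1 + (ε * x) ^ 2) ^ (1:ℝ) * (1 + (ε * x) ^ 2) ^ (s - 1) from by
        rw [Real.rpow_one], ← Real.rpow_add hb]
      norm_num
    have habs : |W' x| = (2 * ε ^ 2 * |x|) * s * (1 + (ε * x) ^ 2) ^ (s - 1) := by
      rw [hW', abs_mul, abs_mul, abs_of_nonneg (Real.rpow_nonneg hb.le _),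
        abs_of_nonneg hs, abs_mul, abs_mul]
      rw [abs_of_nonneg (by norm_num : (0:ℝ) ≤ (2:ℝ)), abs_of_nonneg (sq_nonneg ε)]
    have h2 : 2 * ε ^ 2 * |x| ≤ ε * (1 + (ε * x) ^ 2) := by
      have h2' : (ε * |x|) ^ 2 = (ε * x) ^ 2 := by
        rw [mul_pow, mul_pow, sq_abs]
      have h2'' : 2 * ε ^ 2 * |x| ≤ ε * (1 + (ε * |x|) ^ 2) := by
        nlinarith [mul_nonneg hεpos.le (sq_nonneg (1 - ε * |x|))]
      rw [h2'] at h2''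
      exact h2''
    have hrnn : (0:ℝ) ≤ (1 + (ε * x) ^ 2) ^ (s - 1) := Real.rpow_nonneg hb.le _
    rw [habs, e5]
    have h3 := mul_le_mul_of_nonneg_right h2 hrnn
    nlinarith [h3, hs, hrnn]

  -- basic facts about jap
  have hjaps_pos : ∀ x, (0:ℝ) < jap x ^ s := fun x =>
    lt_of_lt_of_le one_pos (one_le_japs hs x)
  have hjapcont : Continuous jap := by
    have hjd : jap = fun x : ℝ => Real.sqrt (1 + x ^ 2) := rfl
    rw [hjd]
    exact (continuous_const.add (continuous_pow 2)).sqrt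
  have hjapscont : Continuous fun x => jap x ^ s :=
    hjapcont.rpow_const (fun x => Or.inl (ne_of_gt (lt_of_lt_of_le one_pos (one_le_jap x))))
  have hsmulnorm : ∀ (x : ℝ) (z : ℂ), ‖(jap x ^ s : ℝ) • z‖ = jap x ^ s * ‖z‖ := by
    intro x z
    rw [norm_smul, Real.norm_eq_abs, abs_of_pos (hjaps_pos x)]
  -- integrability of the weighted integrands
  have hA : Integrable (fun x : ℝ => jap x ^ (2*s) * ‖u x‖ ^ 2) volume := by
    have h1 := hu2.norm_rpow two_ne_zero ENNReal.ofNat_ne_top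
    have h2 := memLp_one_iff_integrable.1 h1
    apply h2.congr
    refine Filter.Eventually.of_forall fun x => ?_
    simp only
    rw [show ((2:ENNReal)).toReal = ((2:ℕ):ℝ) from by simp, Real.rpow_natCast,
      hsmulnorm, mul_pow, japs_sq]
  set f : ℝ → ℂ := fun x => u' x - (lam:ℂ) * u x with hfdef
  have hf2 : MemLp (fun x => (jap x ^ s : ℝ) • f x) 2 volume := by
    have h1 : MemLp (fun x => (jap x ^ s : ℝ) • u' x - (lam:ℂ) • ((jap x ^ s : ℝ) • u x)) 2
        volume := hu'2.sub (hu2.const_smul (lam:ℂ))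
    have h2 : (fun x => (jap x ^ s : ℝ) • f x)
        = fun x => (jap x ^ s : ℝ) • u' x - (lam:ℂ) • ((jap x ^ s : ℝ) • u x) := by
      funext x
      rw [hfdef]
      simp only
      rw [smul_sub]
      congr 1
      rw [smul_comm, smul_eq_mul]
    rw [h2]
    exact h1
  have hB : Integrable (fun x : ℝ => jap x ^ (2*s) * ‖f x‖ ^ 2) volume := by
    have h1 := hf2.norm_rpow two_ne_zero ENNReal.ofNat_ne_top
    have h2 := memLp_one_iff_integrable.1 h1
    apply h2.congr
    refine Filter.Eventually.of_forall fun x => ?_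
    simp only
    rw [show ((2:ENNReal)).toReal = ((2:ℕ):ℝ) from by simp, Real.rpow_natCast,
      hsmulnorm, mul_pow, japs_sq]
  -- measurability and local integrability of u'
  have hu'meas : AEStronglyMeasurable u' volume := by
    have h2 : u' = fun x => ((jap x ^ s)⁻¹ : ℝ) • ((jap x ^ s : ℝ) • u' x) := by
      funext x
      rw [smul_smul, inv_mul_cancel₀ (ne_of_gt (hjaps_pos x)), one_smul]
    rw [h2]
    exact ((hjapscont.inv₀ (fun x => ne_of_gt (hjaps_pos x))).aestronglyMeasurable).smul
      hu'2.aestronglyMeasurable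
  have hu'Ioc : ∀ a b : ℝ, IntegrableOn u' (Set.Ioc a b) volume := by
    intro a b
    haveI hfin : IsFiniteMeasure (volume.restrict (Set.Ioc a b)) := by
      constructor
      rw [Measure.restrict_apply_univ, Real.volume_Ioc]
      exact ENNReal.ofReal_lt_top
    have hint : Integrable (fun x => (jap x ^ s : ℝ) • u' x)
        (volume.restrict (Set.Ioc a b)) := (hu'2.restrict _).integrable one_le_two
    apply hint.norm.mono' hu'meas.restrict
    refine Filter.Eventually.of_forall fun x => ?_
    show ‖u' x‖ ≤ ‖(jap x ^ s : ℝ) • u' x‖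
    rw [hsmulnorm]
    exact le_mul_of_one_le_left (norm_nonneg _) (one_le_japs hs x)
  have hu'loc : ∀ a b : ℝ, IntervalIntegrable u' volume a b :=
    fun a b => ⟨hu'Ioc a b, hu'Ioc b a⟩
  have hucont : Continuous u := by
    have h2 : ∀ y, u y = u 0 + ∫ t in (0:ℝ)..y, u' t := by
      intro y
      have h3 := hftc 0 y
      rw [← h3]; ring
    rw [show u = fun y => u 0 + ∫ t in (0:ℝ)..y, u' t from funext h2]
    exact continuous_const.add (intervalIntegral.continuous_primitive hu'loc 0)
  have hfmeas : AEStronglyMeasurable f volume :=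
    hu'meas.sub (hucont.aestronglyMeasurable.const_mul (lam:ℂ))
  -- the function h and the FTC for ‖u‖²
  set h : ℝ → ℝ := fun t => 2 * ((starRingEnd ℂ) (u t) * u' t).re with hhdef
  have hG : ∀ x y : ℝ, ‖u y‖ ^ 2 - ‖u x‖ ^ 2 = ∫ t in x..y, h t :=
    fun x y => ftc_normsq hu'loc hftc x y
  have hre_le : ∀ (x : ℝ) (z : ℂ), |((starRingEnd ℂ) (u x) * z).re| ≤ ‖u x‖ * ‖z‖ := by
    intro x z
    calc |((starRingEnd ℂ) (u x) * z).re| ≤ ‖(starRingEnd ℂ) (u x) * z‖ :=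
          Complex.abs_re_le_norm _
      _ = ‖(starRingEnd ℂ) (u x)‖ * ‖z‖ := by rw [norm_mul]
      _ = ‖u x‖ * ‖z‖ := by rw [RCLike.norm_conj]
  have hhIoc : ∀ a b : ℝ, IntegrableOn h (Set.Ioc a b) volume := by
    intro a b
    obtain ⟨Cu, hCu⟩ :=
      isCompact_Icc.exists_bound_of_continuousOn
        (hucont.continuousOn : ContinuousOn u (Set.Icc a b))
    apply Integrable.mono' ((hu'Ioc a b).norm.const_mul (2 * Cu))
    · have hmul : AEStronglyMeasurable (fun t => (starRingEnd ℂ) (u t) * u' t)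
          (volume.restrict (Set.Ioc a b)) :=
        ((Complex.continuous_conj.comp hucont).aestronglyMeasurable.restrict).mul
          hu'meas.restrict
      exact (Complex.continuous_re.comp_aestronglyMeasurable hmul).const_mul 2
    · refine (ae_restrict_iff' measurableSet_Ioc).2
        (Filter.Eventually.of_forall fun t ht => ?_)
      have h1 : ‖u t‖ ≤ Cu := by
        have := hCu t ⟨le_of_lt ht.1, ht.2⟩
        simpa using this
      have h2 := hre_le t (u' t)
      rw [hhdef]
      simp only [Real.norm_eq_abs]
      rw [abs_mul, abs_two]
      nlinarith [norm_nonneg (u' t), abs_nonneg (((starRingEnd ℂ) (u t) * u' t).re)]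
  have hhloc : ∀ a b : ℝ, IntervalIntegrable h volume a b :=
    fun a b => ⟨hhIoc a b, hhIoc b a⟩
  -- the energy identity
  have hφψ : ∀ x y : ℝ, W y * ‖u y‖ ^ 2 - W x * ‖u x‖ ^ 2
      = ∫ t in x..y, (W' t * ‖u t‖ ^ 2 + W t * h t) :=
    ftc_mul (fun a b => hW'cont.intervalIntegrable a b) hhloc hWftc hG
  -- global integrability of the pieces
  have hgcont : Continuous fun x : ℝ => ‖u x‖ ^ 2 := hucont.norm.pow 2
  have hWg : Integrable (fun x => W x * ‖u x‖ ^ 2) volume := by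
    apply hA.mono' ((hWcont.mul hgcont).aestronglyMeasurable)
    refine Filter.Eventually.of_forall fun x => ?_
    rw [Real.norm_eq_abs, Pi.mul_apply, abs_of_nonneg (mul_nonneg (hWpos x).le (by positivity))]
    exact mul_le_mul_of_nonneg_right (hWle x) (by positivity)
  have hW'g : Integrable (fun x => W' x * ‖u x‖ ^ 2) volume := by
    apply (hA.const_mul (s * ε)).mono' ((hW'cont.mul hgcont).aestronglyMeasurable)
    refine Filter.Eventually.of_forall fun x => ?_
    rw [Real.norm_eq_abs, Pi.mul_apply, abs_mul, abs_of_nonneg (a := ‖u x‖ ^ 2) (by positivity)]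
    calc |W' x| * ‖u x‖ ^ 2 ≤ (s * ε * W x) * ‖u x‖ ^ 2 :=
          mul_le_mul_of_nonneg_right (hW'bound x) (by positivity)
      _ ≤ (s * ε) * (jap x ^ (2*s) * ‖u x‖ ^ 2) := by
          rw [mul_assoc]
          apply mul_le_mul_of_nonneg_left _ (by positivity)
          exact mul_le_mul_of_nonneg_right (hWle x) (by positivity)
  have hFmeas : AEStronglyMeasurable (fun x => ‖f x‖ ^ 2) volume := by
    have e : (fun x => ‖f x‖ ^ 2) = fun x => ‖f x‖ * ‖f x‖ := by
      funext x; rw [pow_two]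
    rw [e]
    exact hfmeas.norm.mul hfmeas.norm
  have hWF : Integrable (fun x => W x * ‖f x‖ ^ 2) volume := by
    apply hB.mono' (hWcont.aestronglyMeasurable.mul hFmeas)
    refine Filter.Eventually.of_forall fun x => ?_
    show ‖W x * ‖f x‖ ^ 2‖ ≤ jap x ^ (2*s) * ‖f x‖ ^ 2
    rw [Real.norm_eq_abs, abs_of_nonneg (mul_nonneg (hWpos x).le (by positivity))]
    exact mul_le_mul_of_nonneg_right (hWle x) (by positivity)
  have hWuf : Integrable (fun x => W x * ((starRingEnd ℂ) (u x) * f x).re) volume := by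
    apply ((hA.add hB).const_mul (1/2)).mono'
      (hWcont.aestronglyMeasurable.mul
        (Complex.continuous_re.comp_aestronglyMeasurable
          (((Complex.continuous_conj.comp hucont).aestronglyMeasurable).mul hfmeas)))
    refine Filter.Eventually.of_forall fun x => ?_
    show ‖W x * ((starRingEnd ℂ) (u x) * f x).re‖
        ≤ 1/2 * (jap x ^ (2*s) * ‖u x‖ ^ 2 + jap x ^ (2*s) * ‖f x‖ ^ 2)
    have h1 := hre_le x (f x)
    have h2 : W x ≤ jap x ^ s * jap x ^ s := by
      have h3 := hWle x
      rw [← japs_sq x, pow_two] at h3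
      exact h3
    rw [Real.norm_eq_abs, abs_mul, abs_of_nonneg (hWpos x).le]
    have h3 : W x * |((starRingEnd ℂ) (u x) * f x).re|
        ≤ (jap x ^ s * ‖u x‖) * (jap x ^ s * ‖f x‖) := by
      calc W x * |((starRingEnd ℂ) (u x) * f x).re| ≤ W x * (‖u x‖ * ‖f x‖) :=
            mul_le_mul_of_nonneg_left h1 (hWpos x).le
        _ ≤ (jap x ^ s * jap x ^ s) * (‖u x‖ * ‖f x‖) :=
            mul_le_mul_of_nonneg_right h2 (by positivity)
        _ = (jap x ^ s * ‖u x‖) * (jap x ^ s * ‖f x‖) := by ring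
    have h4 : (jap x ^ s * ‖u x‖) * (jap x ^ s * ‖f x‖)
        ≤ 1/2 * ((jap x ^ s * ‖u x‖) ^ 2 + (jap x ^ s * ‖f x‖) ^ 2) := by
      nlinarith [sq_nonneg (jap x ^ s * ‖u x‖ - jap x ^ s * ‖f x‖)]
    have h5 : (jap x ^ s * ‖u x‖) ^ 2 = jap x ^ (2*s) * ‖u x‖ ^ 2 := by
      rw [mul_pow, japs_sq]
    have h6 : (jap x ^ s * ‖f x‖) ^ 2 = jap x ^ (2*s) * ‖f x‖ ^ 2 := by
      rw [mul_pow, japs_sq]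
    linarith [h3, h4, h5.le, h5.ge, h6.le, h6.ge]
  -- split h
  have hsplit : ∀ x, W x * h x
      = (2 * lam) * (W x * ‖u x‖ ^ 2) + 2 * (W x * ((starRingEnd ℂ) (u x) * f x).re) := by
    intro x
    have e : (starRingEnd ℂ) (u x) * u' x
        = (starRingEnd ℂ) (u x) * f x + (lam:ℂ) * ((starRingEnd ℂ) (u x) * u x) := by
      rw [hfdef]; simp only; ring
    have e2 : (starRingEnd ℂ) (u x) * u x = ((‖u x‖ ^ 2 : ℝ) : ℂ) := by
      rw [mul_comm, Complex.mul_conj, Complex.normSq_eq_norm_sq]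
    have e3 : h x = 2 * lam * ‖u x‖ ^ 2 + 2 * ((starRingEnd ℂ) (u x) * f x).re := by
      rw [hhdef]
      simp only
      rw [e, e2, Complex.add_re,
        show ((lam:ℂ) * ((‖u x‖ ^ 2 : ℝ) : ℂ)).re = lam * ‖u x‖ ^ 2 from by
          rw [← Complex.ofReal_mul, Complex.ofReal_re]]
      ring
    rw [e3]; ring
  have hWh : Integrable (fun x => W x * h x) volume := by
    apply Integrable.congr ((hWg.const_mul (2 * lam)).add (hWuf.const_mul 2))
    exact Filter.Eventually.of_forall fun x => (hsplit x).symm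
  have hψ : Integrable (fun x => W' x * ‖u x‖ ^ 2 + W x * h x) volume := hW'g.add hWh
  have hzero : ∫ x : ℝ, (W' x * ‖u x‖ ^ 2 + W x * h x) = 0 :=
    integral_eq_zero_of_primitive hψ hWg
      (fun z => mul_nonneg (hWpos z).le (by positivity)) hφψ
  -- name the integrals
  set X := ∫ x : ℝ, W x * ‖u x‖ ^ 2 with hX
  set Y := ∫ x : ℝ, W x * ‖f x‖ ^ 2 with hY
  set I1 := ∫ x : ℝ, W' x * ‖u x‖ ^ 2 with hI1
  set I3 := ∫ x : ℝ, W x * ((starRingEnd ℂ) (u x) * f x).re with hI3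
  have hXnn : 0 ≤ X := integral_nonneg fun x => mul_nonneg (hWpos x).le (by positivity)
  have hYnn : 0 ≤ Y := integral_nonneg fun x => mul_nonneg (hWpos x).le (by positivity)
  have hsum : I1 + ((2 * lam) * X + 2 * I3) = 0 := by
    have e1 : ∫ x : ℝ, (W' x * ‖u x‖ ^ 2 + W x * h x)
        = I1 + ∫ x : ℝ, W x * h x := integral_add hW'g hWh
    have e2 : ∫ x : ℝ, W x * h x = (2 * lam) * X + 2 * I3 := by
      rw [integral_congr_ae (Filter.Eventually.of_forall hsplit),
        integral_add (hWg.const_mul _) (hWuf.const_mul _),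
        MeasureTheory.integral_const_mul, MeasureTheory.integral_const_mul]
    rw [← e2, ← e1]
    exact hzero
  -- estimates
  have habs1 : |I1| ≤ (s * ε) * X := by
    have hle : ∀ x : ℝ, ‖W' x * ‖u x‖ ^ 2‖ ≤ (s * ε) * (W x * ‖u x‖ ^ 2) := fun x => by
      rw [Real.norm_eq_abs, abs_mul, abs_of_nonneg (a := ‖u x‖ ^ 2) (by positivity),
        ← mul_assoc]
      exact mul_le_mul_of_nonneg_right (hW'bound x) (by positivity)
    calc |I1| ≤ ∫ x : ℝ, ‖W' x * ‖u x‖ ^ 2‖ := by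
          rw [hI1, ← Real.norm_eq_abs]
          exact norm_integral_le_integral_norm _
      _ ≤ ∫ x : ℝ, (s * ε) * (W x * ‖u x‖ ^ 2) :=
          integral_mono hW'g.norm (hWg.const_mul _) hle
      _ = (s * ε) * X := by rw [MeasureTheory.integral_const_mul]
  have habs3 : |lam| * |I3| ≤ lam ^ 2 / 4 * X + Y := by
    have hle : ∀ x : ℝ, |lam| * ‖W x * ((starRingEnd ℂ) (u x) * f x).re‖
        ≤ lam ^ 2 / 4 * (W x * ‖u x‖ ^ 2) + W x * ‖f x‖ ^ 2 := fun x => by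
      have h1 := hre_le x (f x)
      rw [Real.norm_eq_abs, abs_mul, abs_of_nonneg (hWpos x).le]
      have e2 : |lam| ^ 2 * (W x * ‖u x‖ ^ 2) = lam ^ 2 * (W x * ‖u x‖ ^ 2) := by
        rw [sq_abs]
      have k1 : |lam| * (W x * |((starRingEnd ℂ) (u x) * f x).re|)
          ≤ |lam| * (W x * (‖u x‖ * ‖f x‖)) :=
        mul_le_mul_of_nonneg_left (mul_le_mul_of_nonneg_left h1 (hWpos x).le) (abs_nonneg lam)
      nlinarith [k1, e2, mul_nonneg (hWpos x).le (sq_nonneg (|lam| / 2 * ‖u x‖ - ‖f x‖))]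
    calc |lam| * |I3| ≤ |lam| * ∫ x : ℝ, ‖W x * ((starRingEnd ℂ) (u x) * f x).re‖ := by
          apply mul_le_mul_of_nonneg_left _ hlam0.le
          rw [hI3, ← Real.norm_eq_abs]
          exact norm_integral_le_integral_norm _
      _ = ∫ x : ℝ, |lam| * ‖W x * ((starRingEnd ℂ) (u x) * f x).re‖ :=
          (MeasureTheory.integral_const_mul _ _).symm
      _ ≤ ∫ x : ℝ, (lam ^ 2 / 4 * (W x * ‖u x‖ ^ 2) + W x * ‖f x‖ ^ 2) :=
          integral_mono (hWuf.norm.const_mul _)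
            ((hWg.const_mul _).add hWF) hle
      _ = lam ^ 2 / 4 * X + Y := by
          rw [integral_add (hWg.const_mul _) hWF, MeasureTheory.integral_const_mul]
  have hXY : X ≤ 2 / lam ^ 2 * Y := by
    have h7 : 2 * |lam| * X ≤ |I1| + 2 * |I3| := by
      have e : (2 * lam) * X = -(I1 + 2 * I3) := by linarith [hsum]
      calc 2 * |lam| * X = |(2 * lam) * X| := by
            rw [abs_mul (2 * lam) X, abs_mul 2 lam, abs_two, abs_of_nonneg hXnn]
        _ = |I1 + 2 * I3| := by rw [e, abs_neg]
        _ ≤ |I1| + |2 * I3| := abs_add_le _ _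
        _ = |I1| + 2 * |I3| := by rw [abs_mul, abs_two]
    have h8 := mul_le_mul_of_nonneg_left h7 hlam0.le
    have h9 := mul_le_mul_of_nonneg_left habs1 hlam0.le
    have h10 : |lam| * ((s * ε) * X) ≤ |lam| * ((|lam| / 2) * X) := by
      apply mul_le_mul_of_nonneg_left _ hlam0.le
      exact mul_le_mul_of_nonneg_right hsε hXnn
    have hsq : |lam| * |lam| = lam ^ 2 := by rw [← sq_abs]; ring
    have h11 : lam ^ 2 * X ≤ 2 * Y := by nlinarith [h8, h9, h10, habs3, hsq]
    rw [div_mul_eq_mul_div, le_div_iff₀ (by positivity)]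
    nlinarith [h11]
  -- convert to the japanese bracket weights
  have hLint : (∫ x : ℝ, jap x ^ (2*s) * ‖u x‖ ^ 2) ≤ ε ^ (-(2*s)) * X := by
    have hle : ∀ x : ℝ, jap x ^ (2*s) * ‖u x‖ ^ 2
        ≤ ε ^ (-(2*s)) * (W x * ‖u x‖ ^ 2) := fun x => by
      rw [← mul_assoc]
      exact mul_le_mul_of_nonneg_right (hWge x) (by positivity)
    calc (∫ x : ℝ, jap x ^ (2*s) * ‖u x‖ ^ 2)
        ≤ ∫ x : ℝ, ε ^ (-(2*s)) * (W x * ‖u x‖ ^ 2) :=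
          integral_mono hA (hWg.const_mul _) hle
      _ = ε ^ (-(2*s)) * X := by rw [MeasureTheory.integral_const_mul]
  have hYB : Y ≤ ∫ x : ℝ, jap x ^ (2*s) * ‖f x‖ ^ 2 := by
    apply integral_mono hWF hB
    intro x
    exact mul_le_mul_of_nonneg_right (hWle x) (by positivity)
  have hBnn : 0 ≤ ∫ x : ℝ, jap x ^ (2*s) * ‖f x‖ ^ 2 :=
    integral_nonneg fun x =>
      mul_nonneg (Real.rpow_nonneg (jap_nonneg x) _) (by positivity)
  set K := ε ^ (-(2*s)) * (2 / lam ^ 2) with hK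
  have hεinvnn : (0:ℝ) ≤ ε ^ (-(2*s)) := Real.rpow_nonneg hεpos.le _
  have hKnn : 0 ≤ K := mul_nonneg hεinvnn (by positivity)
  have hfinal1 : (∫ x : ℝ, jap x ^ (2*s) * ‖u x‖ ^ 2)
      ≤ K * ∫ x : ℝ, jap x ^ (2*s) * ‖f x‖ ^ 2 := by
    have c1 : X ≤ 2 / lam ^ 2 * ∫ x : ℝ, jap x ^ (2*s) * ‖f x‖ ^ 2 :=
      le_trans hXY (mul_le_mul_of_nonneg_left hYB (by positivity))
    calc (∫ x : ℝ, jap x ^ (2*s) * ‖u x‖ ^ 2) ≤ ε ^ (-(2*s)) * X := hLint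
      _ ≤ ε ^ (-(2*s)) * (2 / lam ^ 2 * ∫ x : ℝ, jap x ^ (2*s) * ‖f x‖ ^ 2) :=
          mul_le_mul_of_nonneg_left c1 hεinvnn
      _ = K * ∫ x : ℝ, jap x ^ (2*s) * ‖f x‖ ^ 2 := by rw [hK, mul_assoc]
  have hKval : Real.sqrt K ≤ 2 * M ^ s / (|lam| * μ0 ^ s) := by
    have hεs : ε ^ (-s) = M ^ s / μ0 ^ s := by
      rw [hε, Real.rpow_neg (by positivity), Real.div_rpow hμpos.le hMpos.le, inv_div]
    have hKsq : K = (ε ^ (-s) * Real.sqrt 2 / |lam|) ^ 2 := by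
      rw [div_pow, mul_pow, Real.sq_sqrt (by norm_num : (0:ℝ) ≤ 2), sq_abs,
        show (ε ^ (-s)) ^ (2:ℕ) = ε ^ (-(2*s)) from by
          rw [← Real.rpow_natCast (ε ^ (-s)) 2, ← Real.rpow_mul hεpos.le]
          congr 1; push_cast; ring,
        hK]
      ring
    rw [hKsq, Real.sqrt_sq (by positivity), hεs]
    have h2le : Real.sqrt 2 ≤ 2 := by
      nlinarith [Real.sq_sqrt (by norm_num : (0:ℝ) ≤ 2), Real.sqrt_nonneg 2]
    have hμs : (0:ℝ) < μ0 ^ s := Real.rpow_pos_of_pos hμpos _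
    have hMss : (0:ℝ) < M ^ s := Real.rpow_pos_of_pos hMpos _
    rw [div_mul_eq_mul_div, div_div, div_le_div_iff₀ (by positivity) (by positivity)]
    nlinarith [mul_le_mul_of_nonneg_left h2le
      (le_of_lt (mul_pos hMss (mul_pos hlam0 hμs)))]
  calc Real.sqrt (∫ x : ℝ, jap x ^ (2*s) * ‖u x‖ ^ 2)
      ≤ Real.sqrt (K * ∫ x : ℝ, jap x ^ (2*s) * ‖f x‖ ^ 2) := Real.sqrt_le_sqrt hfinal1
    _ = Real.sqrt K * Real.sqrt (∫ x : ℝ, jap x ^ (2*s) * ‖f x‖ ^ 2) :=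
        Real.sqrt_mul hKnn _
    _ ≤ (2 * M ^ s / (|lam| * μ0 ^ s)) * Real.sqrt (∫ x : ℝ, jap x ^ (2*s) * ‖f x‖ ^ 2) :=
        mul_le_mul_of_nonneg_right hKval (Real.sqrt_nonneg _)
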